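/- Let δ > 0 and m₂ > 0. Define γ₂ as the infimum, over all maps T from the set of functions ℝ → ℝ to the set of functions ℝ → ℝ, of the supremum, over all pairs (f_δ, f) of functions ℝ → ℝ such that f is differentiable, f' is Lipschitz continuous with constant m₂, and ‖f − f_δ‖∞ ≤ δ, of ‖T f_δ − f'‖∞ (a value in [0, ∞]). Then γ₂ = √(2 δ m₂), and the infimum is attained by the symmetric divided difference operator T f_δ = (f_δ(· + h) − f_δ(· − h))/(2h) with h = √(2δ/m₂). -/

import Mathlib

open scoped ENNReal

open Real Set



lemma hasDerivAt_max_sq (u : ℝ) :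
    HasDerivAt (fun v : ℝ => max v 0 ^ 2) (2 * max u 0) u := by
  rcases lt_trichotomy u 0 with hu | hu | hu
  · have he : (fun v : ℝ => max v 0 ^ 2) =ᶠ[nhds u] fun _ => (0 : ℝ) := by
      filter_upwards [Iio_mem_nhds hu] with v hv
      simp [max_eq_right (le_of_lt (Set.mem_Iio.mp hv))]
    have h0 : HasDerivAt (fun _ : ℝ => (0 : ℝ)) 0 u := hasDerivAt_const u 0
    simpa [max_eq_right (le_of_lt hu)] using h0.congr_of_eventuallyEq he
  · subst hu
    rw [hasDerivAt_iff_isLittleO]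
    rw [Asymptotics.isLittleO_iff]
    intro c hc
    filter_upwards [Metric.ball_mem_nhds (0:ℝ) hc] with v hv
    simp only [Metric.mem_ball, Real.dist_eq, sub_zero] at hv
    have h1 : max v 0 ^ 2 ≤ v ^ 2 := by
      rcases le_total v 0 with h | h
      · simp [max_eq_right h]; positivity
      · simp [max_eq_left h]
    simp only [Real.norm_eq_abs, max_self, sub_zero, smul_eq_mul, mul_zero]
    have hz : (0:ℝ) ^ 2 = 0 := by norm_num
    rw [hz, sub_zero, abs_of_nonneg (by positivity : (0:ℝ) ≤ max v 0 ^ 2)]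
    have h3 : v ^ 2 = |v| * |v| := by
      rw [← sq_abs]; ring
    nlinarith [abs_nonneg v, h1]
  · have he : (fun v : ℝ => max v 0 ^ 2) =ᶠ[nhds u] fun v => v ^ 2 := by
      filter_upwards [Ioi_mem_nhds hu] with v hv
      simp [max_eq_left (le_of_lt (Set.mem_Ioi.mp hv))]
    have h0 : HasDerivAt (fun v : ℝ => v ^ 2) (2 * u) u := by
      simpa using hasDerivAt_pow 2 u
    simpa [max_eq_left (le_of_lt hu)] using h0.congr_of_eventuallyEq he

lemma max_identity (h x : ℝ) (hh : 0 ≤ h) :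
    max (x + h) 0 - 2 * max x 0 + max (x - h) 0 = max (h - |x|) 0 := by
  rcases abs_cases x with ⟨e, he⟩ | ⟨e, he⟩ <;> rw [e] <;>
    rcases le_total (x + h) 0 with h1 | h1 <;>
    rcases le_total x 0 with h2 | h2 <;>
    rcases le_total (x - h) 0 with h3 | h3 <;>
    simp [max_def] <;> split_ifs <;> linarith

lemma E_bounds (h x : ℝ) (hh : 0 ≤ h) :
    0 ≤ max (x + h) 0 ^ 2 - 2 * max x 0 ^ 2 + max (x - h) 0 ^ 2 ∧
      max (x + h) 0 ^ 2 - 2 * max x 0 ^ 2 + max (x - h) 0 ^ 2 ≤ 2 * h ^ 2 := by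
  rcases le_total 0 (x - h) with h1 | h1
  · have h2 : (0:ℝ) ≤ x := by linarith
    have h3 : (0:ℝ) ≤ x + h := by linarith
    rw [max_eq_left h1, max_eq_left h2, max_eq_left h3]
    constructor <;> nlinarith
  · rw [max_eq_right h1]
    rcases le_total 0 x with h2 | h2
    · have h3 : (0:ℝ) ≤ x + h := by linarith
      rw [max_eq_left h2, max_eq_left h3]
      constructor <;> nlinarith
    · rw [max_eq_right h2]
      rcases le_total 0 (x + h) with h3 | h3
      · rw [max_eq_left h3]; constructor <;> nlinarith
      · rw [max_eq_right h3]; constructor <;> nlinarith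

lemma lip_max (h s t : ℝ) :
    |max (h - |s|) 0 - max (h - |t|) 0| ≤ |s - t| := by
  have h1 : |max (h - |s|) 0 - max (h - |t|) 0| ≤ |(h - |s|) - (h - |t|)| :=
    abs_max_sub_max_le_abs _ _ _
  have h2 : (h - |s|) - (h - |t|) = |t| - |s| := by ring
  rw [h2] at h1
  exact h1.trans ((abs_abs_sub_abs_le_abs_sub t s).trans (le_of_eq (abs_sub_comm t s)))

lemma hasDerivAt_g (m h x : ℝ) (hh : 0 ≤ h) :
    HasDerivAt
      (fun x : ℝ => m / 2 * (max (x + h) 0 ^ 2 - 2 * max x 0 ^ 2 + max (x - h) 0 ^ 2 - h ^ 2))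
      (m * max (h - |x|) 0) x := by
  have d1 : HasDerivAt (fun x : ℝ => max (x + h) 0 ^ 2) (2 * max (x + h) 0) x := by
    have := (hasDerivAt_max_sq (x + h)).comp x ((hasDerivAt_id x).add_const h)
    simpa [Function.comp_def] using this
  have d2 : HasDerivAt (fun x : ℝ => max x 0 ^ 2) (2 * max x 0) x := hasDerivAt_max_sq x
  have d3 : HasDerivAt (fun x : ℝ => max (x - h) 0 ^ 2) (2 * max (x - h) 0) x := by
    have := (hasDerivAt_max_sq (x - h)).comp x ((hasDerivAt_id x).sub_const h)
    simpa [Function.comp_def] using this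
  have d4 := (((d1.sub (d2.const_mul 2)).add d3).sub_const (h ^ 2)).const_mul (m / 2)
  have e : m / 2 * (2 * max (x + h) 0 - 2 * (2 * max x 0) + 2 * max (x - h) 0)
      = m * max (h - |x|) 0 := by
    rw [← max_identity h x hh]; ring
  rw [e] at d4
  exact d4

lemma taylor_sym (f : ℝ → ℝ) (m : ℝ) (hm : 0 ≤ m) (hf : Differentiable ℝ f)
    (hl : ∀ s t : ℝ, |deriv f s - deriv f t| ≤ m * |s - t|) (x h : ℝ) (hh : 0 ≤ h) :
    |f (x + h) - f (x - h) - 2 * h * deriv f x| ≤ m * h ^ 2 := by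
  set c := deriv f x with hc
  set ψ : ℝ → ℝ := fun t => f (x + t) - f (x - t) - 2 * t * c with hψdef
  have hψ : ∀ t : ℝ, HasDerivAt ψ (deriv f (x + t) + deriv f (x - t) - 2 * c) t := by
    intro t
    have d1 : HasDerivAt (fun t : ℝ => f (x + t)) (deriv f (x + t)) t := by
      have := ((hf (x + t)).hasDerivAt).comp t ((hasDerivAt_id t).const_add x)
      simpa [Function.comp_def] using this
    have d2 : HasDerivAt (fun t : ℝ => f (x - t)) (-(deriv f (x - t))) t := by
      have := ((hf (x - t)).hasDerivAt).comp t ((hasDerivAt_const t x).sub (hasDerivAt_id t))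
      simpa [Function.comp_def] using this
    have d3 : HasDerivAt (fun t : ℝ => 2 * t * c) (2 * c) t := by
      have := ((hasDerivAt_id' t).const_mul 2).mul_const c
      exact this.congr_deriv (by ring)
    have := (d1.sub d2).sub d3
    exact this.congr_deriv (by ring)
  have hB : ∀ t : ℝ, HasDerivAt (fun t : ℝ => m * t ^ 2) (2 * m * t) t := by
    intro t
    have := (hasDerivAt_pow 2 t).const_mul m
    exact this.congr_deriv (by norm_num; ring)
  have key : ∀ ⦃t⦄, t ∈ Icc (0:ℝ) h → ‖ψ t‖ ≤ m * t ^ 2 := by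
    apply image_norm_le_of_norm_deriv_right_le_deriv_boundary
      (f' := fun t => deriv f (x + t) + deriv f (x - t) - 2 * c)
    · exact fun t _ => (hψ t).continuousAt.continuousWithinAt
    · exact fun t _ => (hψ t).hasDerivWithinAt
    · simp [hψdef]
    · exact hB
    · intro t ht
      have ht0 : 0 ≤ t := ht.1
      have e1 : |deriv f (x + t) - c| ≤ m * t := by
        have := hl (x + t) x
        simpa [abs_of_nonneg ht0] using this
      have e2 : |deriv f (x - t) - c| ≤ m * t := by
        have := hl (x - t) x
        simpa [abs_of_nonneg ht0] using this
      have : ‖deriv f (x + t) + deriv f (x - t) - 2 * c‖ ≤ m * t + m * t := by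
        rw [Real.norm_eq_abs]
        have : deriv f (x + t) + deriv f (x - t) - 2 * c
            = (deriv f (x + t) - c) + (deriv f (x - t) - c) := by ring
        rw [this]
        exact (abs_add_le _ _).trans (add_le_add e1 e2)
      linarith
  have := key (right_mem_Icc.mpr hh)
  simpa [hψdef, Real.norm_eq_abs] using this

lemma sqrt_facts (δ m₂ : ℝ) (hδ : 0 < δ) (hm₂ : 0 < m₂) :
    m₂ * Real.sqrt (2 * δ / m₂) = Real.sqrt (2 * δ * m₂) := by
  have hhsq : (Real.sqrt (2 * δ / m₂)) ^ 2 = 2 * δ / m₂ := Real.sq_sqrt (by positivity)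
  have key : (m₂ * Real.sqrt (2 * δ / m₂)) ^ 2 = 2 * δ * m₂ := by
    rw [mul_pow, hhsq]; field_simp
  rw [← key, Real.sqrt_sq (by positivity)]

lemma upper_est (δ m₂ : ℝ) (hδ : 0 < δ) (hm₂ : 0 < m₂) (fδ f : ℝ → ℝ)
    (hf : Differentiable ℝ f) (hl : ∀ s t : ℝ, |deriv f s - deriv f t| ≤ m₂ * |s - t|)
    (hc : ∀ x : ℝ, |f x - fδ x| ≤ δ) (x : ℝ) :
    |(fδ (x + Real.sqrt (2 * δ / m₂)) - fδ (x - Real.sqrt (2 * δ / m₂))) /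
        (2 * Real.sqrt (2 * δ / m₂)) - deriv f x| ≤ Real.sqrt (2 * δ * m₂) := by
  set h := Real.sqrt (2 * δ / m₂) with hhdef
  have hh0 : 0 < h := Real.sqrt_pos.mpr (by positivity)
  have hhsq : h ^ 2 = 2 * δ / m₂ := Real.sq_sqrt (by positivity)
  have hm : m₂ * h ^ 2 = 2 * δ := by rw [hhsq]; field_simp
  have ht := taylor_sym f m₂ hm₂.le hf hl x h hh0.le
  have e1 := hc (x + h)
  have e2 := hc (x - h)
  have hE : |fδ (x + h) - fδ (x - h) - 2 * h * deriv f x| ≤ 4 * δ := by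
    have hre : fδ (x + h) - fδ (x - h) - 2 * h * deriv f x
        = -(f (x + h) - fδ (x + h)) + (f (x - h) - fδ (x - h))
          + (f (x + h) - f (x - h) - 2 * h * deriv f x) := by ring
    rw [hre]
    calc |-(f (x + h) - fδ (x + h)) + (f (x - h) - fδ (x - h))
          + (f (x + h) - f (x - h) - 2 * h * deriv f x)|
        ≤ |-(f (x + h) - fδ (x + h))| + |f (x - h) - fδ (x - h)|
          + |f (x + h) - f (x - h) - 2 * h * deriv f x| := abs_add_three _ _ _
      _ ≤ δ + δ + m₂ * h ^ 2 := by
          rw [abs_neg]; exact add_le_add (add_le_add e1 e2) ht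
      _ = 4 * δ := by rw [hm]; ring
  have step : (fδ (x + h) - fδ (x - h)) / (2 * h) - deriv f x
      = (fδ (x + h) - fδ (x - h) - 2 * h * deriv f x) / (2 * h) := by
    field_simp
  rw [step, abs_div, abs_of_pos (by positivity : (0:ℝ) < 2 * h)]
  rw [div_le_iff₀ (by positivity)]
  have key : Real.sqrt (2 * δ * m₂) * (2 * h) = 4 * δ := by
    rw [← sqrt_facts δ m₂ hδ hm₂, ← hhdef]
    nlinarith [hhsq]
  linarith

lemma lower_bound (δ m₂ : ℝ) (hδ : 0 < δ) (hm₂ : 0 < m₂) (T : (ℝ → ℝ) → (ℝ → ℝ)) :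
    ENNReal.ofReal (Real.sqrt (2 * δ * m₂)) ≤
      ⨆ fδ : ℝ → ℝ, ⨆ f : ℝ → ℝ,
        ⨆ _ : Differentiable ℝ f ∧
            (∀ s t : ℝ, |deriv f s - deriv f t| ≤ m₂ * |s - t|) ∧
            (∀ x : ℝ, |f x - fδ x| ≤ δ),
          ⨆ x : ℝ, ENNReal.ofReal |T fδ x - deriv f x| := by
  set h := Real.sqrt (2 * δ / m₂) with hhdef
  have hh0 : 0 < h := Real.sqrt_pos.mpr (by positivity)
  have hhsq : h ^ 2 = 2 * δ / m₂ := Real.sq_sqrt (by positivity)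
  have hm : m₂ * h ^ 2 = 2 * δ := by rw [hhsq]; field_simp
  set g : ℝ → ℝ := fun x =>
    m₂ / 2 * (max (x + h) 0 ^ 2 - 2 * max x 0 ^ 2 + max (x - h) 0 ^ 2 - h ^ 2) with hgdef
  have hgd : ∀ x : ℝ, HasDerivAt g (m₂ * max (h - |x|) 0) x :=
    fun x => hasDerivAt_g m₂ h x hh0.le
  have hdg : deriv g = fun x => m₂ * max (h - |x|) 0 := funext fun x => (hgd x).deriv
  have hgdiff : Differentiable ℝ g := fun x => (hgd x).differentiableAt
  have hglip : ∀ s t : ℝ, |deriv g s - deriv g t| ≤ m₂ * |s - t| := by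
    intro s t
    rw [hdg]
    simp only
    rw [← mul_sub, abs_mul, abs_of_pos hm₂]
    exact mul_le_mul_of_nonneg_left (lip_max h s t) hm₂.le
  have hgbnd : ∀ x : ℝ, |g x - (fun _ : ℝ => (0:ℝ)) x| ≤ δ := by
    intro x
    obtain ⟨b1, b2⟩ := E_bounds h x hh0.le
    simp only [hgdef, sub_zero]
    rw [abs_le]
    constructor <;> nlinarith
  have hgd2 : ∀ x : ℝ, HasDerivAt (fun x => -g x) (-(m₂ * max (h - |x|) 0)) x :=
    fun x => (hgd x).neg
  have hdg2 : deriv (fun x => -g x) = fun x => -(m₂ * max (h - |x|) 0) :=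
    funext fun x => (hgd2 x).deriv
  have hgdiff2 : Differentiable ℝ (fun x => -g x) := fun x => (hgd2 x).differentiableAt
  have hglip2 : ∀ s t : ℝ, |deriv (fun x => -g x) s - deriv (fun x => -g x) t| ≤ m₂ * |s - t| := by
    intro s t
    rw [hdg2]
    simp only
    have : -(m₂ * max (h - |s|) 0) - -(m₂ * max (h - |t|) 0)
        = -(m₂ * max (h - |s|) 0 - m₂ * max (h - |t|) 0) := by ring
    rw [this, abs_neg]
    exact hglip s t |>.trans_eq' (by rw [hdg])
  have hgbnd2 : ∀ x : ℝ, |(fun x => -g x) x - (fun _ : ℝ => (0:ℝ)) x| ≤ δ := by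
    intro x
    simp only [sub_zero, abs_neg]
    simpa using hgbnd x
  have hP1 : Differentiable ℝ g ∧
      (∀ s t : ℝ, |deriv g s - deriv g t| ≤ m₂ * |s - t|) ∧
      (∀ x : ℝ, |g x - (fun _ : ℝ => (0:ℝ)) x| ≤ δ) := ⟨hgdiff, hglip, hgbnd⟩
  have hP2 : Differentiable ℝ (fun x => -g x) ∧
      (∀ s t : ℝ, |deriv (fun x => -g x) s - deriv (fun x => -g x) t| ≤ m₂ * |s - t|) ∧
      (∀ x : ℝ, |(fun x => -g x) x - (fun _ : ℝ => (0:ℝ)) x| ≤ δ) := ⟨hgdiff2, hglip2, hgbnd2⟩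
  set a := m₂ * h with hadef
  have ha0 : 0 < a := by positivity
  have haeq : a = Real.sqrt (2 * δ * m₂) := sqrt_facts δ m₂ hδ hm₂
  have hdg0 : deriv g 0 = a := by rw [hdg]; simp [max_eq_left hh0.le, hadef]
  have hdg20 : deriv (fun x => -g x) 0 = -a := by rw [hdg2]; simp [max_eq_left hh0.le, hadef]
  set v := T (fun _ : ℝ => (0:ℝ)) 0 with hvdef
  rw [← haeq]
  rcases le_total v 0 with hv | hv
  · refine le_trans ?_ (le_iSup_of_le (fun _ : ℝ => (0:ℝ))
      (le_iSup_of_le g (le_iSup_of_le hP1 (le_iSup_of_le 0 le_rfl))))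
    rw [hdg0]
    exact ENNReal.ofReal_le_ofReal (by rw [abs_sub_comm, abs_of_nonneg (by linarith)]; linarith)
  · refine le_trans ?_ (le_iSup_of_le (fun _ : ℝ => (0:ℝ))
      (le_iSup_of_le (fun x => -g x) (le_iSup_of_le hP2 (le_iSup_of_le 0 le_rfl))))
    rw [hdg20]
    exact ENNReal.ofReal_le_ofReal (by rw [sub_neg_eq_add, abs_of_nonneg (by linarith)]; linarith)

/-- the best possible worst-case error `γ₂` for estimating `f'`
from data `f_δ` with `‖f - f_δ‖∞ ≤ δ` and `f'` Lipschitz with constant `m₂`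
equals `√(2δm₂)`, and the infimum is attained by the symmetric divided
difference with stepsize `h = √(2δ/m₂)`. -/
theorem optimality_of_divided_difference
    (δ m₂ : ℝ) (hδ : 0 < δ) (hm₂ : 0 < m₂) :
    (⨅ T : (ℝ → ℝ) → (ℝ → ℝ),
        ⨆ fδ : ℝ → ℝ, ⨆ f : ℝ → ℝ,
          ⨆ _ : Differentiable ℝ f ∧
              (∀ s t : ℝ, |deriv f s - deriv f t| ≤ m₂ * |s - t|) ∧
              (∀ x : ℝ, |f x - fδ x| ≤ δ),
            ⨆ x : ℝ, ENNReal.ofReal |T fδ x - deriv f x|)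
      = ENNReal.ofReal (Real.sqrt (2 * δ * m₂)) ∧
    (⨆ fδ : ℝ → ℝ, ⨆ f : ℝ → ℝ,
        ⨆ _ : Differentiable ℝ f ∧
            (∀ s t : ℝ, |deriv f s - deriv f t| ≤ m₂ * |s - t|) ∧
            (∀ x : ℝ, |f x - fδ x| ≤ δ),
          ⨆ x : ℝ, ENNReal.ofReal
            |(fδ (x + Real.sqrt (2 * δ / m₂)) - fδ (x - Real.sqrt (2 * δ / m₂))) /
                (2 * Real.sqrt (2 * δ / m₂)) - deriv f x|)
      = ENNReal.ofReal (Real.sqrt (2 * δ * m₂)) := by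
  set T₀ : (ℝ → ℝ) → (ℝ → ℝ) := fun fδ x =>
    (fδ (x + Real.sqrt (2 * δ / m₂)) - fδ (x - Real.sqrt (2 * δ / m₂))) /
      (2 * Real.sqrt (2 * δ / m₂)) with hT₀
  have hupper : (⨆ fδ : ℝ → ℝ, ⨆ f : ℝ → ℝ,
      ⨆ _ : Differentiable ℝ f ∧
          (∀ s t : ℝ, |deriv f s - deriv f t| ≤ m₂ * |s - t|) ∧
          (∀ x : ℝ, |f x - fδ x| ≤ δ),
        ⨆ x : ℝ, ENNReal.ofReal |T₀ fδ x - deriv f x|)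
      ≤ ENNReal.ofReal (Real.sqrt (2 * δ * m₂)) := by
    refine iSup_le fun fδ => iSup_le fun f => iSup_le fun hP => iSup_le fun x => ?_
    exact ENNReal.ofReal_le_ofReal (upper_est δ m₂ hδ hm₂ fδ f hP.1 hP.2.1 hP.2.2 x)
  have hlow := lower_bound δ m₂ hδ hm₂
  constructor
  · exact le_antisymm (iInf_le_of_le T₀ hupper) (le_iInf hlow)
  · exact le_antisymm hupper (hlow T₀)
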